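/- Let f ∈ ℝ^{d_1×…×d_m} be a nonnegative weakly irreducible tensor and 1 < p_1,…,p_m < ∞ such that there exists i ∈ [m] with (m−1)p_i' ≤ p_k for every k ∈ [m]\{i}. Then G is nonexpansive with respect to μ: for every x, y ∈ S^{d−d_i}_{++}, μ(G(x), G(y)) ≤ μ(x, y). -/

import Mathlib

/-!
Common setup: tensors `f : (∀ i, Fin (d i)) → ℝ`, the induced multilinear form,
partial gradients, `ψ_q`, `ℓ^p` norms, Hölder conjugates, singular vectors,
(weak) irreducibility, the maps `σ_i`, `s_{i,k}`, `T_α`, `G`, the quantities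
`Q`, `‖f‖_{p_1,…,p_m}`, `Q_i`, `γ_i^±` and the Hilbert-type metric `μ`.
Points of `ℝ^{d-d_i}` are encoded as full tuples (the maps involved do not
depend on the `i`-th component), with conditions imposed only for `k ≠ i`.
-/

open Finset Filter

noncomputable section

namespace TensorPF

variable {m : ℕ} {d : Fin m → ℕ}

/-- The multilinear form induced by the tensor `f`. -/
def form (f : (∀ i, Fin (d i)) → ℝ) (x : ∀ i, Fin (d i) → ℝ) : ℝ :=
  ∑ j : ∀ i, Fin (d i), f j * ∏ i, x i (j i)

/-- The gradient of the multilinear form in its `i`-th argument. -/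
def grad (f : (∀ i, Fin (d i)) → ℝ) (i : Fin m) (x : ∀ i, Fin (d i) → ℝ) :
    Fin (d i) → ℝ :=
  fun ji => form f (Function.update x i (fun l => if l = ji then (1 : ℝ) else 0))

/-- `ψ_q(y)_j = |y_j|^(q-1) sign(y_j)`. -/
def psi (q : ℝ) {n : ℕ} (y : Fin n → ℝ) : Fin n → ℝ :=
  fun j => |y j| ^ (q - 1) * Real.sign (y j)

/-- The `ℓ^q`-norm on `Fin n → ℝ`. -/
def pnorm (q : ℝ) {n : ℕ} (y : Fin n → ℝ) : ℝ :=
  (∑ j, |y j| ^ q) ^ (1 / q)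

/-- The Hölder conjugate `q' = q/(q-1)`. -/
def conjExp (q : ℝ) : ℝ := q / (q - 1)

/-- `σ_i(x) = sign(f(x)) ψ_{p_i'}(∇_i f(x))`. -/
def sigma (f : (∀ i, Fin (d i)) → ℝ) (p : Fin m → ℝ) (i : Fin m)
    (x : ∀ i, Fin (d i) → ℝ) : Fin (d i) → ℝ :=
  fun ji => Real.sign (form f x) * psi (conjExp (p i)) (grad f i x) ji

/-- `Q(x) = |f(x)| / ∏ i ‖x_i‖_{p_i}`. -/
def Qform (f : (∀ i, Fin (d i)) → ℝ) (p : Fin m → ℝ)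
    (x : ∀ i, Fin (d i) → ℝ) : ℝ :=
  |form f x| / ∏ i, pnorm (p i) (x i)

/-- The projective tensor norm `‖f‖_{p_1,…,p_m} = sup Q`. -/
def tnorm (f : (∀ i, Fin (d i)) → ℝ) (p : Fin m → ℝ) : ℝ :=
  sSup {q : ℝ | ∃ x : ∀ i, Fin (d i) → ℝ, (∀ i, x i ≠ 0) ∧ q = Qform f p x}

/-- `x ∈ S^d` is a singular vector of `f` with singular value `lam` if
`σ_i(x) = lam^{p_i'-1} x_i` for all `i`. -/
def IsSingular (f : (∀ i, Fin (d i)) → ℝ) (p : Fin m → ℝ) (lam : ℝ)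
    (x : ∀ i, Fin (d i) → ℝ) : Prop :=
  (∀ i, pnorm (p i) (x i) = 1) ∧
  ∀ i ji, sigma f p i x ji = lam ^ (conjExp (p i) - 1) * x i ji

/-- `s_{i,k}(x) = ψ_{p_k'}(∇_k f(x_1,…,ψ_{p_i'}(∇_i f(x)),…,x_m))`. -/
def sik (f : (∀ i, Fin (d i)) → ℝ) (p : Fin m → ℝ) (i k : Fin m)
    (x : ∀ l, Fin (d l) → ℝ) : Fin (d k) → ℝ :=
  psi (conjExp (p k))
    (grad f k (Function.update x i (psi (conjExp (p i)) (grad f i x))))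

/-- The `m`-partite graph associated to a nonnegative tensor. -/
def wGraph (f : (∀ i, Fin (d i)) → ℝ) : SimpleGraph ((k : Fin m) × Fin (d k)) where
  Adj a b := a.1 ≠ b.1 ∧ ∃ j : ∀ l, Fin (d l), j a.1 = a.2 ∧ j b.1 = b.2 ∧ 0 < f j
  symm := by
    constructor
    rintro a b ⟨h, j, h1, h2, h3⟩
    exact ⟨h.symm, j, h2, h1, h3⟩
  loopless := by constructor; rintro a ⟨h, -⟩; exact h rfl

/-- `f ≥ 0` is weakly irreducible if its graph is connected. -/
def WeaklyIrreducible (f : (∀ i, Fin (d i)) → ℝ) : Prop := (wGraph f).Connected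

/-- `f ≥ 0` is irreducible. -/
def Irreducible (f : (∀ i, Fin (d i)) → ℝ) : Prop :=
  ∀ J : Set ((k : Fin m) × Fin (d k)), J.Nonempty → J ≠ Set.univ →
    ∃ (k : Fin m) (j : ∀ l, Fin (d l)),
      (⟨k, j k⟩ : (l : Fin m) × Fin (d l)) ∈ J ∧
      (∀ l, l ≠ k → (⟨l, j l⟩ : (l : Fin m) × Fin (d l)) ∉ J) ∧ 0 < f j

/-- `T_α(z) = α_0 z + (α_1 σ_1(z),…,α_m σ_m(z))`. -/
def Tmap (f : (∀ i, Fin (d i)) → ℝ) (p : Fin m → ℝ) (a0 : ℝ) (a : Fin m → ℝ)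
    (z : ∀ i, Fin (d i) → ℝ) : ∀ i, Fin (d i) → ℝ :=
  fun i ji => a0 * z i ji + a i * sigma f p i z ji

/-- `Q_i(x) = ‖∇_i f(x)‖_{p_i'} / ∏_{k ≠ i} ‖x_k‖_{p_k}`. -/
def Qi (f : (∀ i, Fin (d i)) → ℝ) (p : Fin m → ℝ) (i : Fin m)
    (x : ∀ l, Fin (d l) → ℝ) : ℝ :=
  pnorm (conjExp (p i)) (grad f i x) / ∏ k ∈ Finset.univ.erase i, pnorm (p k) (x k)

/-- A critical point of `Q_i` with critical value `lam`. -/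
def IsCritQi (f : (∀ i, Fin (d i)) → ℝ) (p : Fin m → ℝ) (i : Fin m) (lam : ℝ)
    (x : ∀ l, Fin (d l) → ℝ) : Prop :=
  (∀ k, k ≠ i → pnorm (p k) (x k) = 1) ∧ grad f i x ≠ 0 ∧
  ∀ k, k ≠ i → ∀ jk,
    sik f p i k x jk = lam ^ (conjExp (p i) * (conjExp (p k) - 1)) * x k jk

/-- Collatz–Wielandt ratio `γ_i^-`. -/
def gammaMinus (f : (∀ i, Fin (d i)) → ℝ) (p : Fin m → ℝ) (i : Fin m)
    (x : ∀ l, Fin (d l) → ℝ) : ℝ :=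
  ∏ k ∈ Finset.univ.erase i, ⨅ jk : Fin (d k), (sik f p i k x jk / x k jk) ^ (p k - 1)

/-- Collatz–Wielandt ratio `γ_i^+`. -/
def gammaPlus (f : (∀ i, Fin (d i)) → ℝ) (p : Fin m → ℝ) (i : Fin m)
    (x : ∀ l, Fin (d l) → ℝ) : ℝ :=
  ∏ k ∈ Finset.univ.erase i, ⨆ jk : Fin (d k), (sik f p i k x jk / x k jk) ^ (p k - 1)

/-- The power-method map `G(x) = (s_{i,k}(x)/‖s_{i,k}(x)‖_{p_k})_{k≠i}`. -/
def Gmap (f : (∀ i, Fin (d i)) → ℝ) (p : Fin m → ℝ) (i : Fin m)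
    (x : ∀ l, Fin (d l) → ℝ) : ∀ l, Fin (d l) → ℝ :=
  fun k jk => sik f p i k x jk / pnorm (p k) (sik f p i k x)

/-- The Hilbert-type metric `μ` on `S^{d-d_i}_{++}`. -/
def mu (p : Fin m → ℝ) (i : Fin m) (x y : ∀ l, Fin (d l) → ℝ) : ℝ :=
  Real.log (∏ l ∈ Finset.univ.erase i,
    (⨆ jl : Fin (d l), (x l jl / y l jl) ^ (p l - 1)) /
    (⨅ jl : Fin (d l), (x l jl / y l jl) ^ (p l - 1)))


/-! ### Auxiliary lemmas -/

lemma grad_eq (f : (∀ i, Fin (d i)) → ℝ) (k : Fin m) (z : ∀ l, Fin (d l) → ℝ)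
    (jk : Fin (d k)) :
    grad f k z jk = ∑ j ∈ Finset.univ.filter (fun j : ∀ l, Fin (d l) => j k = jk),
      f j * ∏ l ∈ Finset.univ.erase k, z l (j l) := by
  unfold grad form
  rw [Finset.sum_filter]
  refine Finset.sum_congr rfl fun j _ => ?_
  rw [← Finset.mul_prod_erase Finset.univ _ (Finset.mem_univ k)]
  rw [Function.update_self]
  have : ∀ l ∈ Finset.univ.erase k,
      Function.update z k (fun l => if l = jk then (1:ℝ) else 0) l (j l) = z l (j l) := by
    intro l hl
    rw [Function.update_of_ne (Finset.ne_of_mem_erase hl)]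
  rw [Finset.prod_congr rfl this]
  by_cases h : j k = jk <;> simp [h]

lemma grad_le_mul (f : (∀ i, Fin (d i)) → ℝ) (hf0 : ∀ j, 0 ≤ f j) (k : Fin m)
    (jk : Fin (d k)) (z w : ∀ l, Fin (d l) → ℝ) (c : Fin m → ℝ)
    (hz : ∀ l ∈ Finset.univ.erase k, ∀ j, 0 ≤ z l j)
    (hzw : ∀ l ∈ Finset.univ.erase k, ∀ j, z l j ≤ c l * w l j) :
    grad f k z jk ≤ (∏ l ∈ Finset.univ.erase k, c l) * grad f k w jk := by
  rw [grad_eq, grad_eq, Finset.mul_sum]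
  refine Finset.sum_le_sum fun j _ => ?_
  rw [mul_left_comm]
  refine mul_le_mul_of_nonneg_left ?_ (hf0 j)
  calc ∏ l ∈ Finset.univ.erase k, z l (j l)
      ≤ ∏ l ∈ Finset.univ.erase k, (c l * w l (j l)) :=
        Finset.prod_le_prod (fun l hl => hz l hl (j l)) (fun l hl => hzw l hl (j l))
    _ = (∏ l ∈ Finset.univ.erase k, c l) * ∏ l ∈ Finset.univ.erase k, w l (j l) := by
        rw [Finset.prod_mul_distrib]

lemma grad_pos (f : (∀ i, Fin (d i)) → ℝ) (hf0 : ∀ j, 0 ≤ f j) (k : Fin m)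
    (jk : Fin (d k)) (z : ∀ l, Fin (d l) → ℝ)
    (hz : ∀ l ∈ Finset.univ.erase k, ∀ j, 0 < z l j)
    (hex : ∃ j : ∀ l, Fin (d l), 0 < f j ∧ j k = jk) :
    0 < grad f k z jk := by
  rw [grad_eq]
  obtain ⟨j0, hj0, hj0k⟩ := hex
  refine Finset.sum_pos' (fun j _ => ?_) ⟨j0, ?_, ?_⟩
  · exact mul_nonneg (hf0 j) (Finset.prod_nonneg fun l hl => (hz l hl (j l)).le)
  · simp [hj0k]
  · exact mul_pos hj0 (Finset.prod_pos fun l hl => hz l hl (j0 l))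

lemma exists_adj_of_reachable {V : Type*} {G : SimpleGraph V} {u w : V}
    (h : G.Reachable u w) (hne : u ≠ w) : ∃ b, G.Adj u b := by
  obtain ⟨walk⟩ := h
  cases walk with
  | nil => exact absurd rfl hne
  | cons h _ => exact ⟨_, h⟩

lemma exists_pos_entry (hm : 2 ≤ m) (hd : ∀ k, 0 < d k)
    (f : (∀ i, Fin (d i)) → ℝ) (hwirr : WeaklyIrreducible f)
    (k : Fin m) (jk : Fin (d k)) :
    ∃ j : ∀ l, Fin (d l), 0 < f j ∧ j k = jk := by
  have hcard : 1 < Fintype.card (Fin m) := by simp only [Fintype.card_fin]; omega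
  obtain ⟨l, hl⟩ := Fintype.exists_ne_of_one_lt_card hcard k
  have hvw : (⟨k, jk⟩ : (l : Fin m) × Fin (d l)) ≠ ⟨l, ⟨0, hd l⟩⟩ := by
    intro h
    exact hl (congrArg Sigma.fst h).symm
  obtain ⟨b, hb⟩ := exists_adj_of_reachable
    (hwirr.preconnected ⟨k, jk⟩ ⟨l, ⟨0, hd l⟩⟩) hvw
  obtain ⟨-, j, hj1, -, hj3⟩ := hb
  exact ⟨j, hj3, hj1⟩

lemma psi_of_pos (q : ℝ) {n : ℕ} (y : Fin n → ℝ) (j : Fin n) (hy : 0 < y j) :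
    psi q y j = y j ^ (q - 1) := by
  unfold psi
  rw [Real.sign_of_pos hy, mul_one, abs_of_pos hy]

lemma psi_pos (q : ℝ) {n : ℕ} (y : Fin n → ℝ) (j : Fin n) (hy : 0 < y j) :
    0 < psi q y j := by
  rw [psi_of_pos q y j hy]
  exact Real.rpow_pos_of_pos hy _

lemma pnorm_pos (q : ℝ) {n : ℕ} (hn : 0 < n) (y : Fin n → ℝ) (hy : ∀ j, 0 < y j) :
    0 < pnorm q y := by
  unfold pnorm
  refine Real.rpow_pos_of_pos ?_ _
  have : (⟨0, hn⟩ : Fin n) ∈ Finset.univ := Finset.mem_univ _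
  refine Finset.sum_pos (fun j _ => ?_) ⟨_, this⟩
  exact Real.rpow_pos_of_pos (abs_pos.mpr (hy j).ne') _

lemma fin_exists_max {n : ℕ} (hn : 0 < n) (g : Fin n → ℝ) :
    ∃ j0, (⨆ j, g j) = g j0 ∧ ∀ j, g j ≤ g j0 := by
  haveI : Nonempty (Fin n) := ⟨⟨0, hn⟩⟩
  obtain ⟨j0, hj0⟩ := Finite.exists_max g
  exact ⟨j0, le_antisymm (ciSup_le hj0) (le_ciSup (Set.Finite.bddAbove (Set.finite_range g)) j0), hj0⟩

lemma fin_exists_min {n : ℕ} (hn : 0 < n) (g : Fin n → ℝ) :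
    ∃ j0, (⨅ j, g j) = g j0 ∧ ∀ j, g j0 ≤ g j := by
  haveI : Nonempty (Fin n) := ⟨⟨0, hn⟩⟩
  obtain ⟨j0, hj0⟩ := Finite.exists_min g
  exact ⟨j0, le_antisymm (ciInf_le (Set.Finite.bddBelow (Set.finite_range g)) j0) (le_ciInf hj0), hj0⟩

lemma ciSup_rpow {n : ℕ} (hn : 0 < n) (g : Fin n → ℝ) (hg : ∀ j, 0 ≤ g j)
    {e : ℝ} (he : 0 ≤ e) : (⨆ j, g j) ^ e = ⨆ j, g j ^ e := by
  obtain ⟨j0, h1, h2⟩ := fin_exists_max hn g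
  obtain ⟨j1, h3, h4⟩ := fin_exists_max hn (fun j => g j ^ e)
  rw [h1, h3]
  exact le_antisymm (h4 j0) (Real.rpow_le_rpow (hg j1) (h2 j1) he)

lemma ciInf_rpow {n : ℕ} (hn : 0 < n) (g : Fin n → ℝ) (hg : ∀ j, 0 ≤ g j)
    {e : ℝ} (he : 0 ≤ e) : (⨅ j, g j) ^ e = ⨅ j, g j ^ e := by
  obtain ⟨j0, h1, h2⟩ := fin_exists_min hn g
  obtain ⟨j1, h3, h4⟩ := fin_exists_min hn (fun j => g j ^ e)
  rw [h1, h3]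
  exact le_antisymm (Real.rpow_le_rpow (hg j0) (h2 j1) he) (h4 j0)

lemma conjExp_sub_one_pos (q : ℝ) (hq : 1 < q) : 0 < conjExp q - 1 := by
  unfold conjExp
  have h1 : 0 < q - 1 := by linarith
  rw [div_sub_one (ne_of_gt h1)]
  have : q - (q - 1) = 1 := by ring
  rw [this]
  positivity

lemma conjExp_sub_one_mul (q : ℝ) (hq : 1 < q) : (conjExp q - 1) * (q - 1) = 1 := by
  unfold conjExp
  have h1 : q - 1 ≠ 0 := by intro h; linarith [sub_eq_zero.mp h]
  field_simp
  ring

lemma sik_pos (hm : 2 ≤ m) (hd : ∀ k, 0 < d k) (p : Fin m → ℝ)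
    (f : (∀ i, Fin (d i)) → ℝ) (hf0 : ∀ j, 0 ≤ f j) (hwirr : WeaklyIrreducible f)
    (i k : Fin m) (x : ∀ l, Fin (d l) → ℝ)
    (hx : ∀ l, l ≠ i → ∀ j, 0 < x l j) :
    ∀ jk, 0 < sik f p i k x jk := by
  intro jk
  have hgx : ∀ ji, 0 < grad f i x ji := fun ji =>
    grad_pos f hf0 i ji x (fun l hl j => hx l (Finset.ne_of_mem_erase hl) j)
      (exists_pos_entry hm hd f hwirr i ji)
  have hupd : ∀ l ∈ Finset.univ.erase k, ∀ j,
      0 < Function.update x i (psi (conjExp (p i)) (grad f i x)) l j := by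
    intro l _ j
    by_cases h : l = i
    · subst h; rw [Function.update_self]; exact psi_pos _ _ _ (hgx j)
    · rw [Function.update_of_ne h]; exact hx l h j
  have hgk : 0 < grad f k (Function.update x i (psi (conjExp (p i)) (grad f i x))) jk :=
    grad_pos f hf0 k jk _ hupd (exists_pos_entry hm hd f hwirr k jk)
  exact psi_pos _ _ _ hgk

lemma sik_le (hm : 2 ≤ m) (hd : ∀ k, 0 < d k) (p : Fin m → ℝ) (hp : ∀ k, 1 < p k)
    (f : (∀ i, Fin (d i)) → ℝ) (hf0 : ∀ j, 0 ≤ f j) (hwirr : WeaklyIrreducible f)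
    (i k : Fin m) (hk : k ≠ i) (x y : ∀ l, Fin (d l) → ℝ)
    (hx : ∀ l, l ≠ i → ∀ j, 0 < x l j) (hy : ∀ l, l ≠ i → ∀ j, 0 < y l j)
    (c : Fin m → ℝ) (hc : ∀ l, 0 < c l)
    (hxy : ∀ l, l ≠ i → ∀ j, x l j ≤ c l * y l j) :
    ∀ jk, sik f p i k x jk ≤
      ((∏ l ∈ Finset.univ.erase i, c l) ^ (conjExp (p i) - 1) *
        ∏ l ∈ (Finset.univ.erase i).erase k, c l) ^ (conjExp (p k) - 1) *
        sik f p i k y jk := by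
  intro jk
  have ha : 0 < conjExp (p i) - 1 := conjExp_sub_one_pos _ (hp i)
  have hb : 0 < conjExp (p k) - 1 := conjExp_sub_one_pos _ (hp k)
  have hgx : ∀ ji, 0 < grad f i x ji := fun ji =>
    grad_pos f hf0 i ji x (fun l hl j => hx l (Finset.ne_of_mem_erase hl) j)
      (exists_pos_entry hm hd f hwirr i ji)
  have hgy : ∀ ji, 0 < grad f i y ji := fun ji =>
    grad_pos f hf0 i ji y (fun l hl j => hy l (Finset.ne_of_mem_erase hl) j)
      (exists_pos_entry hm hd f hwirr i ji)
  have h1 : ∀ ji, grad f i x ji ≤ (∏ l ∈ Finset.univ.erase i, c l) * grad f i y ji :=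
    fun ji => grad_le_mul f hf0 i ji x y c
      (fun l hl j => (hx l (Finset.ne_of_mem_erase hl) j).le)
      (fun l hl j => hxy l (Finset.ne_of_mem_erase hl) j)
  have hPc : 0 < ∏ l ∈ Finset.univ.erase i, c l :=
    Finset.prod_pos fun l _ => hc l
  set u := psi (conjExp (p i)) (grad f i x) with hu_def
  set v := psi (conjExp (p i)) (grad f i y) with hv_def
  set Pc := ∏ l ∈ Finset.univ.erase i, c l with hPc_def
  have hupos : ∀ ji, 0 < u ji := fun ji => psi_pos _ _ _ (hgx ji)
  have hvpos : ∀ ji, 0 < v ji := fun ji => psi_pos _ _ _ (hgy ji)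
  have huv : ∀ ji, u ji ≤ Pc ^ (conjExp (p i) - 1) * v ji := by
    intro ji
    rw [hu_def, hv_def, psi_of_pos _ _ _ (hgx ji), psi_of_pos _ _ _ (hgy ji)]
    calc grad f i x ji ^ (conjExp (p i) - 1)
        ≤ (Pc * grad f i y ji) ^ (conjExp (p i) - 1) :=
          Real.rpow_le_rpow (hgx ji).le (h1 ji) ha.le
      _ = Pc ^ (conjExp (p i) - 1) * grad f i y ji ^ (conjExp (p i) - 1) :=
          Real.mul_rpow hPc.le (hgy ji).le
  set c' : Fin m → ℝ := fun l => if l = i then Pc ^ (conjExp (p i) - 1) else c l with hc'_def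
  have h2 : grad f k (Function.update x i u) jk ≤
      (∏ l ∈ Finset.univ.erase k, c' l) * grad f k (Function.update y i v) jk := by
    refine grad_le_mul f hf0 k jk _ _ c' ?_ ?_
    · intro l _ j
      by_cases h : l = i
      · subst h; rw [Function.update_self]; exact (hupos j).le
      · rw [Function.update_of_ne h]; exact (hx l h j).le
    · intro l _ j
      by_cases h : l = i
      · subst h
        rw [Function.update_self, Function.update_self, hc'_def]
        simpa using huv j
      · rw [Function.update_of_ne h, Function.update_of_ne h, hc'_def]
        simpa [h] using hxy l h j
  have h3 : ∏ l ∈ Finset.univ.erase k, c' l =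
      Pc ^ (conjExp (p i) - 1) * ∏ l ∈ (Finset.univ.erase i).erase k, c l := by
    have hik : i ∈ Finset.univ.erase k :=
      Finset.mem_erase.mpr ⟨Ne.symm hk, Finset.mem_univ i⟩
    rw [← Finset.mul_prod_erase (Finset.univ.erase k) c' hik]
    congr 1
    · simp [hc'_def]
    · rw [Finset.erase_right_comm]
      refine Finset.prod_congr rfl fun l hl => ?_
      have : l ≠ i := Finset.ne_of_mem_erase (Finset.mem_of_mem_erase hl)
      simp [hc'_def, this]
  have hgkx : 0 < grad f k (Function.update x i u) jk := by
    refine grad_pos f hf0 k jk _ ?_ (exists_pos_entry hm hd f hwirr k jk)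
    intro l _ j
    by_cases h : l = i
    · subst h; rw [Function.update_self]; exact hupos j
    · rw [Function.update_of_ne h]; exact hx l h j
  have hgky : 0 < grad f k (Function.update y i v) jk := by
    refine grad_pos f hf0 k jk _ ?_ (exists_pos_entry hm hd f hwirr k jk)
    intro l _ j
    by_cases h : l = i
    · subst h; rw [Function.update_self]; exact hvpos j
    · rw [Function.update_of_ne h]; exact hy l h j
  have hsx : sik f p i k x jk = grad f k (Function.update x i u) jk ^ (conjExp (p k) - 1) := by
    unfold sik
    rw [← hu_def, psi_of_pos _ _ _ hgkx]
  have hsy : sik f p i k y jk = grad f k (Function.update y i v) jk ^ (conjExp (p k) - 1) := by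
    unfold sik
    rw [← hv_def, psi_of_pos _ _ _ hgky]
  rw [hsx, hsy]
  have hC : 0 < Pc ^ (conjExp (p i) - 1) * ∏ l ∈ (Finset.univ.erase i).erase k, c l := by
    have : 0 < ∏ l ∈ (Finset.univ.erase i).erase k, c l := Finset.prod_pos fun l _ => hc l
    positivity
  calc grad f k (Function.update x i u) jk ^ (conjExp (p k) - 1)
      ≤ ((Pc ^ (conjExp (p i) - 1) * ∏ l ∈ (Finset.univ.erase i).erase k, c l) *
          grad f k (Function.update y i v) jk) ^ (conjExp (p k) - 1) := by
        refine Real.rpow_le_rpow hgkx.le ?_ hb.le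
        rw [← h3]; exact h2
    _ = (Pc ^ (conjExp (p i) - 1) * ∏ l ∈ (Finset.univ.erase i).erase k, c l) ^
          (conjExp (p k) - 1) * grad f k (Function.update y i v) jk ^ (conjExp (p k) - 1) :=
        Real.mul_rpow hC.le hgky.le

/-- the power-method map `G` is nonexpansive for the metric `μ`. -/
theorem statement_17 {m : ℕ} {d : Fin m → ℕ} (hm : 2 ≤ m) (hd : ∀ k, 0 < d k)
    (p : Fin m → ℝ) (hp : ∀ k, 1 < p k)
    (f : (∀ i, Fin (d i)) → ℝ) (hf0 : ∀ j, 0 ≤ f j)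
    (hwirr : WeaklyIrreducible f)
    (i : Fin m) (hpi : ∀ k, k ≠ i → ((m : ℝ) - 1) * conjExp (p i) ≤ p k) :
    ∀ x y : ∀ l, Fin (d l) → ℝ,
      (∀ l, l ≠ i → ∀ jl, 0 < x l jl) → (∀ l, l ≠ i → pnorm (p l) (x l) = 1) →
      (∀ l, l ≠ i → ∀ jl, 0 < y l jl) → (∀ l, l ≠ i → pnorm (p l) (y l) = 1) →
      mu p i (Gmap f p i x) (Gmap f p i y) ≤ mu p i x y := by
  intro x y hx _ hy _
  haveI hne : ∀ l, Nonempty (Fin (d l)) := fun l => ⟨⟨0, hd l⟩⟩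
  have hrpos : ∀ l, l ≠ i → ∀ j, 0 < x l j / y l j := fun l hl j =>
    div_pos (hx l hl j) (hy l hl j)
  set cM : Fin m → ℝ := fun l => if l = i then 1 else ⨆ j, x l j / y l j with hcM_def
  set cI : Fin m → ℝ := fun l => if l = i then 1 else (⨅ j, x l j / y l j)⁻¹ with hcI_def
  have hinf_pos : ∀ l, l ≠ i → 0 < ⨅ j, x l j / y l j := by
    intro l h
    obtain ⟨j0, hj0, -⟩ := fin_exists_min (hd l) (fun j => x l j / y l j)
    rw [hj0]; exact hrpos l h j0
  have hMpos : ∀ l, 0 < cM l := by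
    intro l
    rw [hcM_def]
    by_cases h : l = i
    · simp [h]
    · simp only [if_neg h]
      exact lt_of_lt_of_le (hrpos l h ⟨0, hd l⟩)
        (le_ciSup (f := fun j => x l j / y l j)
          (Set.Finite.bddAbove (Set.finite_range _)) ⟨0, hd l⟩)
  have hIpos : ∀ l, 0 < cI l := by
    intro l
    rw [hcI_def]
    by_cases h : l = i
    · simp [h]
    · simp only [if_neg h]
      exact inv_pos.mpr (hinf_pos l h)
  have hxley : ∀ l, l ≠ i → ∀ j, x l j ≤ cM l * y l j := by
    intro l h j
    have h1 : x l j / y l j ≤ cM l := by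
      rw [hcM_def]; simp only [if_neg h]
      exact le_ciSup (f := fun j' => x l j' / y l j')
        (Set.Finite.bddAbove (Set.finite_range _)) j
    calc x l j = (x l j / y l j) * y l j := by
          rw [div_mul_cancel₀ _ (ne_of_gt (hy l h j))]
      _ ≤ cM l * y l j := mul_le_mul_of_nonneg_right h1 (hy l h j).le
  have hylex : ∀ l, l ≠ i → ∀ j, y l j ≤ cI l * x l j := by
    intro l h j
    have h1 : (⨅ j', x l j' / y l j') ≤ x l j / y l j :=
      ciInf_le (Set.Finite.bddBelow (Set.finite_range _)) j
    have h2 : (x l j / y l j)⁻¹ ≤ cI l := by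
      rw [hcI_def]; simp only [if_neg h]
      exact inv_anti₀ (hinf_pos l h) h1
    calc y l j = (x l j / y l j)⁻¹ * x l j := by
          rw [inv_div, div_mul_cancel₀ _ (ne_of_gt (hx l h j))]
      _ ≤ cI l * x l j := mul_le_mul_of_nonneg_right h2 (hx l h j).le
  have hrho1 : ∀ l, 1 ≤ cM l * cI l := by
    intro l
    by_cases h : l = i
    · simp [hcM_def, hcI_def, h]
    · rw [hcM_def, hcI_def]; simp only [if_neg h]
      rw [← div_eq_mul_inv, one_le_div (hinf_pos l h)]
      exact le_trans (ciInf_le (f := fun j => x l j / y l j)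
          (Set.Finite.bddBelow (Set.finite_range _)) ⟨0, hd l⟩)
        (le_ciSup (f := fun j => x l j / y l j)
          (Set.Finite.bddAbove (Set.finite_range _)) ⟨0, hd l⟩)
  have hrhopos : ∀ l, 0 < cM l * cI l := fun l => mul_pos (hMpos l) (hIpos l)
  set B1 : Fin m → ℝ := fun k =>
    (∏ l ∈ Finset.univ.erase i, cM l) ^ (conjExp (p i) - 1) *
      ∏ l ∈ (Finset.univ.erase i).erase k, cM l with hB1_def
  set B2 : Fin m → ℝ := fun k =>
    (∏ l ∈ Finset.univ.erase i, cI l) ^ (conjExp (p i) - 1) *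
      ∏ l ∈ (Finset.univ.erase i).erase k, cI l with hB2_def
  have hB1pos : ∀ k, 0 < B1 k := fun k => mul_pos
    (Real.rpow_pos_of_pos (Finset.prod_pos fun l _ => hMpos l) _)
    (Finset.prod_pos fun l _ => hMpos l)
  have hB2pos : ∀ k, 0 < B2 k := fun k => mul_pos
    (Real.rpow_pos_of_pos (Finset.prod_pos fun l _ => hIpos l) _)
    (Finset.prod_pos fun l _ => hIpos l)
  have hupper : ∀ k, k ≠ i → ∀ jk, sik f p i k x jk ≤
      B1 k ^ (conjExp (p k) - 1) * sik f p i k y jk := by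
    intro k hk jk
    have := sik_le hm hd p hp f hf0 hwirr i k hk x y hx hy cM hMpos hxley jk
    simpa [hB1_def] using this
  have hlower : ∀ k, k ≠ i → ∀ jk, sik f p i k y jk ≤
      B2 k ^ (conjExp (p k) - 1) * sik f p i k x jk := by
    intro k hk jk
    have := sik_le hm hd p hp f hf0 hwirr i k hk y x hy hx cI hIpos hylex jk
    simpa [hB2_def] using this
  clear_value B1 B2
  have hsxpos : ∀ k jk, 0 < sik f p i k x jk := fun k =>
    sik_pos hm hd p f hf0 hwirr i k x hx
  have hsypos : ∀ k jk, 0 < sik f p i k y jk := fun k =>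
    sik_pos hm hd p f hf0 hwirr i k y hy
  have hNxpos : ∀ k, 0 < pnorm (p k) (sik f p i k x) := fun k =>
    pnorm_pos _ (hd k) _ (hsxpos k)
  have hNypos : ∀ k, 0 < pnorm (p k) (sik f p i k y) := fun k =>
    pnorm_pos _ (hd k) _ (hsypos k)
  have htpos : ∀ k jk, 0 < Gmap f p i x k jk / Gmap f p i y k jk := by
    intro k jk
    exact div_pos (div_pos (hsxpos k jk) (hNxpos k)) (div_pos (hsypos k jk) (hNypos k))
  have hposk : ∀ k, k ≠ i → 0 <
      (⨆ jk : Fin (d k), (Gmap f p i x k jk / Gmap f p i y k jk) ^ (p k - 1)) /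
      (⨅ jk : Fin (d k), (Gmap f p i x k jk / Gmap f p i y k jk) ^ (p k - 1)) := by
    intro k _
    obtain ⟨j0, hj0, -⟩ := fin_exists_min (hd k)
      (fun jk => (Gmap f p i x k jk / Gmap f p i y k jk) ^ (p k - 1))
    obtain ⟨j1, hj1, -⟩ := fin_exists_max (hd k)
      (fun jk => (Gmap f p i x k jk / Gmap f p i y k jk) ^ (p k - 1))
    rw [hj0, hj1]
    exact div_pos (Real.rpow_pos_of_pos (htpos k j1) _) (Real.rpow_pos_of_pos (htpos k j0) _)
  have hratio : ∀ k, k ≠ i →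
      (⨆ jk : Fin (d k), (Gmap f p i x k jk / Gmap f p i y k jk) ^ (p k - 1)) /
      (⨅ jk : Fin (d k), (Gmap f p i x k jk / Gmap f p i y k jk) ^ (p k - 1)) ≤
      B1 k * B2 k := by
    intro k hk
    have hek : 0 < p k - 1 := by have := hp k; linarith
    have hN : 0 < pnorm (p k) (sik f p i k y) / pnorm (p k) (sik f p i k x) :=
      div_pos (hNypos k) (hNxpos k)
    have ht : ∀ jk, Gmap f p i x k jk / Gmap f p i y k jk =
        (sik f p i k x jk / sik f p i k y jk) *
        (pnorm (p k) (sik f p i k y) / pnorm (p k) (sik f p i k x)) := by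
      intro jk
      unfold Gmap
      rw [div_div_div_comm, div_div_eq_mul_div, mul_div_assoc]
    have hB1r : 0 < B1 k ^ (conjExp (p k) - 1) := Real.rpow_pos_of_pos (hB1pos k) _
    have hB2r : 0 < B2 k ^ (conjExp (p k) - 1) := Real.rpow_pos_of_pos (hB2pos k) _
    have hub : ∀ jk, Gmap f p i x k jk / Gmap f p i y k jk ≤
        B1 k ^ (conjExp (p k) - 1) *
        (pnorm (p k) (sik f p i k y) / pnorm (p k) (sik f p i k x)) := by
      intro jk
      rw [ht jk]
      refine mul_le_mul_of_nonneg_right ?_ hN.le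
      rw [div_le_iff₀ (hsypos k jk)]
      exact hupper k hk jk
    have hlb : ∀ jk, (B2 k ^ (conjExp (p k) - 1))⁻¹ *
        (pnorm (p k) (sik f p i k y) / pnorm (p k) (sik f p i k x)) ≤
        Gmap f p i x k jk / Gmap f p i y k jk := by
      intro jk
      rw [ht jk]
      refine mul_le_mul_of_nonneg_right ?_ hN.le
      rw [le_div_iff₀ (hsypos k jk), inv_mul_le_iff₀ hB2r]
      exact hlower k hk jk
    have hsupb : (⨆ jk : Fin (d k), (Gmap f p i x k jk / Gmap f p i y k jk) ^ (p k - 1)) ≤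
        (B1 k ^ (conjExp (p k) - 1) *
          (pnorm (p k) (sik f p i k y) / pnorm (p k) (sik f p i k x))) ^ (p k - 1) :=
      ciSup_le fun jk => Real.rpow_le_rpow (htpos k jk).le (hub jk) hek.le
    have hlbpos : 0 < (B2 k ^ (conjExp (p k) - 1))⁻¹ *
        (pnorm (p k) (sik f p i k y) / pnorm (p k) (sik f p i k x)) :=
      mul_pos (inv_pos.mpr hB2r) hN
    have hinfb : ((B2 k ^ (conjExp (p k) - 1))⁻¹ *
        (pnorm (p k) (sik f p i k y) / pnorm (p k) (sik f p i k x))) ^ (p k - 1) ≤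
        ⨅ jk : Fin (d k), (Gmap f p i x k jk / Gmap f p i y k jk) ^ (p k - 1) :=
      le_ciInf fun jk => Real.rpow_le_rpow hlbpos.le (hlb jk) hek.le
    have hinfpos : 0 < ⨅ jk : Fin (d k),
        (Gmap f p i x k jk / Gmap f p i y k jk) ^ (p k - 1) :=
      lt_of_lt_of_le (Real.rpow_pos_of_pos hlbpos _) hinfb
    calc (⨆ jk : Fin (d k), (Gmap f p i x k jk / Gmap f p i y k jk) ^ (p k - 1)) /
        (⨅ jk : Fin (d k), (Gmap f p i x k jk / Gmap f p i y k jk) ^ (p k - 1))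
        ≤ (B1 k ^ (conjExp (p k) - 1) *
            (pnorm (p k) (sik f p i k y) / pnorm (p k) (sik f p i k x))) ^ (p k - 1) /
          ((B2 k ^ (conjExp (p k) - 1))⁻¹ *
            (pnorm (p k) (sik f p i k y) / pnorm (p k) (sik f p i k x))) ^ (p k - 1) :=
          div_le_div₀ (Real.rpow_nonneg (mul_pos hB1r hN).le _) hsupb
            (Real.rpow_pos_of_pos hlbpos _) hinfb
      _ = ((B1 k ^ (conjExp (p k) - 1) *
            (pnorm (p k) (sik f p i k y) / pnorm (p k) (sik f p i k x))) /
          ((B2 k ^ (conjExp (p k) - 1))⁻¹ *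
            (pnorm (p k) (sik f p i k y) / pnorm (p k) (sik f p i k x)))) ^ (p k - 1) :=
          (Real.div_rpow (mul_pos hB1r hN).le hlbpos.le _).symm
      _ = ((B1 k * B2 k) ^ (conjExp (p k) - 1)) ^ (p k - 1) := by
          congr 1
          rw [Real.mul_rpow (hB1pos k).le (hB2pos k).le]
          field_simp [ne_of_gt hB2r, ne_of_gt (hNxpos k), ne_of_gt (hNypos k)]
      _ = (B1 k * B2 k) ^ ((conjExp (p k) - 1) * (p k - 1)) :=
          (Real.rpow_mul (mul_pos (hB1pos k) (hB2pos k)).le _ _).symm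
      _ = B1 k * B2 k := by
          rw [conjExp_sub_one_mul (p k) (hp k), Real.rpow_one]
  -- the product inequality
  set R := ∏ l ∈ Finset.univ.erase i, (cM l * cI l) with hR_def
  have hRpos : 0 < R := Finset.prod_pos fun l _ => hrhopos l
  set n := (Finset.univ.erase i : Finset (Fin m)).card with hn_def
  have hncast : (n : ℝ) = (m : ℝ) - 1 := by
    rw [hn_def, Finset.card_erase_of_mem (Finset.mem_univ i), Finset.card_univ,
      Fintype.card_fin, Nat.cast_sub (by omega), Nat.cast_one]
  have hbase_eq : ∀ k ∈ Finset.univ.erase i, B1 k * B2 k =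
      R ^ (conjExp (p i) - 1) * ∏ l ∈ (Finset.univ.erase i).erase k, (cM l * cI l) := by
    intro k _
    rw [hB1_def, hB2_def, hR_def]
    simp only
    rw [mul_mul_mul_comm,
      ← Real.mul_rpow (Finset.prod_nonneg fun l _ => (hMpos l).le)
        (Finset.prod_nonneg fun l _ => (hIpos l).le),
      ← Finset.prod_mul_distrib, ← Finset.prod_mul_distrib]
  have hstep : ∏ k ∈ Finset.univ.erase i, (B1 k * B2 k) =
      (R ^ (conjExp (p i) - 1)) ^ n * (R ^ n / R) := by
    rw [Finset.prod_congr rfl hbase_eq, Finset.prod_mul_distrib, Finset.prod_const]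
    congr 1
    calc ∏ k ∈ Finset.univ.erase i, ∏ l ∈ (Finset.univ.erase i).erase k, (cM l * cI l)
        = ∏ k ∈ Finset.univ.erase i, (R / (cM k * cI k)) := by
          refine Finset.prod_congr rfl fun k hk => ?_
          rw [eq_div_iff (ne_of_gt (hrhopos k)), hR_def]
          exact Finset.prod_erase_mul _ _ hk
      _ = (∏ _k ∈ Finset.univ.erase i, R) / ∏ k ∈ Finset.univ.erase i, (cM k * cI k) :=
          Finset.prod_div_distrib _ _
      _ = R ^ n / R := by rw [Finset.prod_const, ← hR_def]
  have hApow : (R ^ (conjExp (p i) - 1)) ^ n * (R ^ n / R) =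
      R ^ ((conjExp (p i) - 1) * (n : ℝ) + ((n : ℝ) - 1)) := by
    have hdiv : R ^ ((n : ℝ)) / R = R ^ ((n : ℝ) - 1) := by
      rw [Real.rpow_sub hRpos, Real.rpow_one]
    rw [← Real.rpow_natCast (R ^ (conjExp (p i) - 1)) n, ← Real.rpow_natCast R n,
      ← Real.rpow_mul hRpos.le, hdiv, ← Real.rpow_add hRpos]
  have hR1 : 1 ≤ R := by
    rw [hR_def]
    calc (1 : ℝ) = ∏ _l ∈ Finset.univ.erase i, (1 : ℝ) := (Finset.prod_const_one).symm
      _ ≤ ∏ l ∈ Finset.univ.erase i, (cM l * cI l) :=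
          Finset.prod_le_prod (fun _ _ => zero_le_one) (fun l _ => hrho1 l)
  have hfinal : R ^ ((conjExp (p i) - 1) * (n : ℝ) + ((n : ℝ) - 1)) ≤
      ∏ l ∈ Finset.univ.erase i, (cM l * cI l) ^ (p l - 1) := by
    rw [hR_def, ← Real.finset_prod_rpow _ _ (fun l _ => (hrhopos l).le) _]
    refine Finset.prod_le_prod
      (fun l _ => (Real.rpow_pos_of_pos (hrhopos l) _).le)
      (fun l hl => Real.rpow_le_rpow_of_exponent_le (hrho1 l) ?_)
    have heq : (conjExp (p i) - 1) * ((m : ℝ) - 1) + (((m : ℝ) - 1) - 1) =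
        ((m : ℝ) - 1) * conjExp (p i) - 1 := by ring
    rw [hncast, heq]
    have := hpi l (Finset.ne_of_mem_erase hl)
    linarith
  have hprodle : ∏ k ∈ Finset.univ.erase i, (B1 k * B2 k) ≤
      ∏ l ∈ Finset.univ.erase i, (cM l * cI l) ^ (p l - 1) := by
    rw [hstep, hApow]; exact hfinal
  have hmuxy : mu p i x y =
      Real.log (∏ l ∈ Finset.univ.erase i, (cM l * cI l) ^ (p l - 1)) := by
    unfold mu
    congr 1
    refine Finset.prod_congr rfl fun l hl => ?_
    have h : l ≠ i := Finset.ne_of_mem_erase hl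
    have he : (0 : ℝ) ≤ p l - 1 := by have := hp l; linarith
    rw [← ciSup_rpow (hd l) _ (fun j => (hrpos l h j).le) he,
      ← ciInf_rpow (hd l) _ (fun j => (hrpos l h j).le) he,
      Real.mul_rpow (hMpos l).le (hIpos l).le, hcM_def, hcI_def]
    simp only [if_neg h]
    rw [Real.inv_rpow (hinf_pos l h).le, div_eq_mul_inv]
  calc mu p i (Gmap f p i x) (Gmap f p i y)
      ≤ Real.log (∏ k ∈ Finset.univ.erase i, (B1 k * B2 k)) := by
        unfold mu
        refine Real.log_le_log ?_ ?_
        · exact Finset.prod_pos fun k hk => hposk k (Finset.ne_of_mem_erase hk)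
        · exact Finset.prod_le_prod
            (fun k hk => (hposk k (Finset.ne_of_mem_erase hk)).le)
            (fun k hk => hratio k (Finset.ne_of_mem_erase hk))
    _ ≤ Real.log (∏ l ∈ Finset.univ.erase i, (cM l * cI l) ^ (p l - 1)) :=
        Real.log_le_log (Finset.prod_pos fun k _ => mul_pos (hB1pos k) (hB2pos k)) hprodle
    _ = mu p i x y := hmuxy.symm

end TensorPF
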